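/- Under the hypotheses IC(x⁰) ≤ 1/4, ‖(A_IᵗA_I)⁻¹‖₂ ≤ 2, unit-norm columns, |I| = p, y = Ax⁰ + b with ‖b‖₂ ≤ ε, and x⋆ an ℓ¹ minimizer under the constraint ‖Ax − y‖₂ ≤ ε, one has the ℓ¹ error bound ‖x⋆ − x⁰‖₁ ≤ (ε/3)(14√(2p) + 16p). -/

import Mathlib

open Finset Matrix

/-- ℓ¹ norm of a finitely-indexed real vector. -/
noncomputable def l1 {ι : Type*} [Fintype ι] (x : ι → ℝ) : ℝ := ∑ i, |x i|

/-- ℓ² (Euclidean) norm. -/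
noncomputable def l2 {ι : Type*} [Fintype ι] (x : ι → ℝ) : ℝ := Real.sqrt (∑ i, (x i) ^ 2)

/-- ℓ^∞ norm. -/
noncomputable def linf {ι : Type*} [Fintype ι] (x : ι → ℝ) : ℝ := sSup {y | ∃ i, y = |x i|}

/-- Operator norm induced by the Euclidean norms (spectral norm). -/
noncomputable def opNorm2 {ι κ : Type*} [Fintype ι] [Fintype κ] (M : Matrix ι κ ℝ) : ℝ :=
  sSup {y | ∃ x : κ → ℝ, l2 x ≤ 1 ∧ y = l2 (M.mulVec x)}

/-- Operator norm from ℓ¹ to ℓ². -/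
noncomputable def norm12 {ι κ : Type*} [Fintype ι] [Fintype κ] (M : Matrix ι κ ℝ) : ℝ :=
  sSup {y | ∃ x : κ → ℝ, x ≠ 0 ∧ y = l2 (M.mulVec x) / l1 x}

/-- Submatrix of the columns of `A` indexed by `I`. -/
def colSub {n m : ℕ} (A : Matrix (Fin n) (Fin m) ℝ) (I : Finset (Fin m)) :
    Matrix (Fin n) {j // j ∈ I} ℝ := fun i j => A i j

/-- The Gram matrix `A_Iᵗ A_I`. -/
def gram {n m : ℕ} (A : Matrix (Fin n) (Fin m) ℝ) (I : Finset (Fin m)) :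
    Matrix {j // j ∈ I} {j // j ∈ I} ℝ := (colSub A I)ᵀ * colSub A I

/-- The sign vector of `x` restricted to `I`. -/
noncomputable def signI {m : ℕ} (x : Fin m → ℝ) (I : Finset (Fin m)) : {j // j ∈ I} → ℝ :=
  fun j => Real.sign (x j)

/-- The vector `d(x) = A_I (A_IᵗA_I)⁻¹ sign(x_I)`. -/
noncomputable def dvec {n m : ℕ} (A : Matrix (Fin n) (Fin m) ℝ) (I : Finset (Fin m))
    (x : Fin m → ℝ) : Fin n → ℝ :=
  (colSub A I).mulVec ((gram A I)⁻¹.mulVec (signI x I))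

/-- The identification coefficient `IC(x) = max_{j ∉ I} |a_jᵗ d(x)|`. -/
noncomputable def IC {n m : ℕ} (A : Matrix (Fin n) (Fin m) ℝ) (I : Finset (Fin m))
    (x : Fin m → ℝ) : ℝ :=
  sSup {y | ∃ j ∉ I, y = |∑ i, A i j * dvec A I x i|}

/-- Restriction of `x` to `I`, extended by zero. -/
def restr {m : ℕ} (I : Finset (Fin m)) (x : Fin m → ℝ) : Fin m → ℝ :=
  fun i => if i ∈ I then x i else 0


/-! ### Auxiliary lemmas -/

section Aux

def eucl {ι : Type*} [Fintype ι] (x : ι → ℝ) : EuclideanSpace ℝ ι := WithLp.toLp 2 x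

lemma l2_eq_norm {ι : Type*} [Fintype ι] (x : ι → ℝ) : l2 x = ‖eucl x‖ := by
  rw [EuclideanSpace.norm_eq]
  simp [l2, eucl, Real.norm_eq_abs, sq_abs]

lemma dot_eq_inner {ι : Type*} [Fintype ι] (x y : ι → ℝ) :
    ∑ i, x i * y i = inner ℝ (eucl x) (eucl y) := by
  rw [PiLp.inner_apply]; simp [eucl, mul_comm]

lemma l2_nonneg {ι : Type*} [Fintype ι] (x : ι → ℝ) : 0 ≤ l2 x := Real.sqrt_nonneg _

lemma dot_le_l2 {ι : Type*} [Fintype ι] (x y : ι → ℝ) :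
    ∑ i, x i * y i ≤ l2 x * l2 y := by
  rw [dot_eq_inner, l2_eq_norm, l2_eq_norm]
  exact real_inner_le_norm _ _

lemma l2_smul {ι : Type*} [Fintype ι] (c : ℝ) (x : ι → ℝ) : l2 (c • x) = |c| * l2 x := by
  rw [l2_eq_norm, l2_eq_norm, show eucl (c • x) = c • eucl x from rfl, norm_smul,
    Real.norm_eq_abs]

lemma l2_sum_le {ι κ : Type*} [Fintype ι] (s : Finset κ) (f : κ → ι → ℝ) :
    l2 (∑ j ∈ s, f j) ≤ ∑ j ∈ s, l2 (f j) := by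
  have : eucl (∑ j ∈ s, f j) = ∑ j ∈ s, eucl (f j) := by simp [eucl, WithLp.toLp_sum]
  rw [l2_eq_norm, this]
  exact (norm_sum_le _ _).trans (le_of_eq (by simp [l2_eq_norm]))

lemma sq_l2 {ι : Type*} [Fintype ι] (x : ι → ℝ) : l2 x ^ 2 = ∑ i, (x i) ^ 2 :=
  Real.sq_sqrt (by positivity)

lemma abs_le_l2 {ι : Type*} [Fintype ι] (x : ι → ℝ) (i : ι) : |x i| ≤ l2 x := by
  rw [l2, ← Real.sqrt_sq_eq_abs]
  exact Real.sqrt_le_sqrt (Finset.single_le_sum (f := fun i => (x i)^2)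
    (fun _ _ => sq_nonneg _) (mem_univ i))

lemma l2_add_le {ι : Type*} [Fintype ι] (x y : ι → ℝ) : l2 (x + y) ≤ l2 x + l2 y := by
  rw [l2_eq_norm, l2_eq_norm, l2_eq_norm]; exact norm_add_le (eucl x) (eucl y)

lemma l2_neg {ι : Type*} [Fintype ι] (x : ι → ℝ) : l2 (-x) = l2 x := by simp [l2]

lemma l2_sub_le {ι : Type*} [Fintype ι] (x y : ι → ℝ) : l2 (x - y) ≤ l2 x + l2 y := by
  rw [sub_eq_add_neg]
  exact (l2_add_le x (-y)).trans (by rw [l2_neg])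

lemma l1_le_sqrt_card_l2 {ι : Type*} [Fintype ι] (x : ι → ℝ) :
    l1 x ≤ Real.sqrt (Fintype.card ι) * l2 x := by
  have h := dot_le_l2 (fun i => |x i|) (fun _ => (1:ℝ))
  have e1 : l2 (fun i : ι => |x i|) = l2 x := by simp [l2, sq_abs]
  have e2 : l2 (fun _ : ι => (1:ℝ)) = Real.sqrt (Fintype.card ι) := by simp [l2]
  simp only [mul_one] at h
  calc l1 x ≤ l2 x * Real.sqrt (Fintype.card ι) := by rw [l1]; rw [e1, e2] at h; exact h
    _ = _ := mul_comm _ _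

lemma l2_eq_zero {ι : Type*} [Fintype ι] {x : ι → ℝ} (h : l2 x = 0) : x = 0 := by
  funext i
  have := abs_le_l2 x i
  rw [h] at this
  simpa using le_antisymm this (abs_nonneg _)

lemma opNorm2_bound {ι κ : Type*} [Fintype ι] [Fintype κ] (M : Matrix ι κ ℝ) {c : ℝ}
    (hc : opNorm2 M ≤ c) (x : κ → ℝ) : l2 (M.mulVec x) ≤ c * l2 x := by
  have hbdd : BddAbove {y | ∃ x : κ → ℝ, l2 x ≤ 1 ∧ y = l2 (M.mulVec x)} := by
    refine ⟨Real.sqrt (∑ i, (∑ j, |M i j|) ^ 2), ?_⟩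
    rintro y ⟨v, hv, rfl⟩
    unfold l2
    apply Real.sqrt_le_sqrt
    apply Finset.sum_le_sum
    intro i _
    have h1 : |M.mulVec v i| ≤ ∑ j, |M i j| := by
      rw [Matrix.mulVec, dotProduct]
      refine (Finset.abs_sum_le_sum_abs _ _).trans (Finset.sum_le_sum fun j _ => ?_)
      rw [abs_mul]
      exact mul_le_of_le_one_right (abs_nonneg _) ((abs_le_l2 v j).trans hv)
    calc (M.mulVec v i)^2 = |M.mulVec v i|^2 := (sq_abs _).symm
      _ ≤ (∑ j, |M i j|)^2 := by
          apply pow_le_pow_left₀ (abs_nonneg _) h1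
  rcases eq_or_ne (l2 x) 0 with h0 | h0
  · rw [l2_eq_zero h0, Matrix.mulVec_zero]
    simp [l2]
  · have hpos : 0 < l2 x := lt_of_le_of_ne (l2_nonneg x) (Ne.symm h0)
    have hmem : l2 (M.mulVec ((l2 x)⁻¹ • x)) ∈
        {y | ∃ x : κ → ℝ, l2 x ≤ 1 ∧ y = l2 (M.mulVec x)} := by
      refine ⟨(l2 x)⁻¹ • x, ?_, rfl⟩
      rw [l2_smul, abs_of_pos (by positivity), inv_mul_cancel₀ h0]
    have hle := (le_csSup hbdd hmem).trans hc
    rw [Matrix.mulVec_smul, l2_smul, abs_of_pos (by positivity)] at hle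
    calc l2 (M.mulVec x) = l2 x * ((l2 x)⁻¹ * l2 (M.mulVec x)) := by field_simp
      _ ≤ l2 x * c := mul_le_mul_of_nonneg_left hle (l2_nonneg x)
      _ = c * l2 x := mul_comm _ _

lemma dotProduct_le_l2 {ι : Type*} [Fintype ι] (x y : ι → ℝ) : x ⬝ᵥ y ≤ l2 x * l2 y :=
  dot_le_l2 x y

lemma dotProduct_self_eq_sq {ι : Type*} [Fintype ι] (x : ι → ℝ) : x ⬝ᵥ x = l2 x ^ 2 := by
  rw [sq_l2]; simp [dotProduct, sq]

lemma adjoint_dot {ι κ : Type*} [Fintype ι] [Fintype κ] (B : Matrix ι κ ℝ) (a : κ → ℝ)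
    (v : ι → ℝ) : (B.mulVec a) ⬝ᵥ v = a ⬝ᵥ (Bᵀ.mulVec v) := by
  rw [dotProduct_comm, Matrix.dotProduct_mulVec, Matrix.mulVec_transpose, dotProduct_comm]

lemma gram_symm {n m : ℕ} (A : Matrix (Fin n) (Fin m) ℝ) (I : Finset (Fin m)) :
    (gram A I)ᵀ = gram A I := by
  rw [_root_.gram, Matrix.transpose_mul, Matrix.transpose_transpose]

lemma ginv_symm {n m : ℕ} (A : Matrix (Fin n) (Fin m) ℝ) (I : Finset (Fin m)) :
    ((gram A I)⁻¹)ᵀ = (gram A I)⁻¹ := by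
  rw [Matrix.transpose_nonsing_inv, gram_symm]

lemma adjoint_dot' {k : Type*} [Fintype k] (M : Matrix k k ℝ)
    (hM : Mᵀ = M) (a c : k → ℝ) : a ⬝ᵥ (M.mulVec c) = (M.mulVec a) ⬝ᵥ c := by
  rw [Matrix.dotProduct_mulVec, ← Matrix.mulVec_transpose, hM]

lemma proj_bound {n m : ℕ} (A : Matrix (Fin n) (Fin m) ℝ) (I : Finset (Fin m))
    (hinv : IsUnit (gram A I).det)
    (hgram : ∀ x, l2 ((gram A I)⁻¹.mulVec x) ≤ 2 * l2 x) (v : Fin n → ℝ) :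
    l2 ((gram A I)⁻¹.mulVec ((colSub A I)ᵀ.mulVec v)) ≤ Real.sqrt 2 * l2 v := by
  set B := colSub A I with hB
  set G := gram A I with hG
  set u := Bᵀ.mulVec v with hu
  set w := G⁻¹.mulVec u with hw
  set z := B.mulVec w with hz
  have hGw : G.mulVec w = u := by
    rw [hw, Matrix.mulVec_mulVec, Matrix.mul_nonsing_inv _ hinv, Matrix.one_mulVec]
  have hBtB : ∀ x, Bᵀ.mulVec (B.mulVec x) = G.mulVec x := by
    intro x; rw [Matrix.mulVec_mulVec]; rfl
  have hform : ∀ x c : {j // j ∈ I} → ℝ,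
      x ⬝ᵥ (G⁻¹.mulVec c) = (B.mulVec (G⁻¹.mulVec x)) ⬝ᵥ (B.mulVec (G⁻¹.mulVec c)) := by
    intro x c
    rw [adjoint_dot, hBtB, Matrix.mulVec_mulVec, Matrix.mul_nonsing_inv _ hinv,
      Matrix.one_mulVec, adjoint_dot' _ (ginv_symm A I)]
  have hzz : z ⬝ᵥ z = w ⬝ᵥ u := by
    rw [hz, adjoint_dot, hBtB, hGw]
  have hzv : z ⬝ᵥ v = w ⬝ᵥ u := by
    rw [hz, adjoint_dot, ← hu]
  have hzlev : l2 z ≤ l2 v := by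
    rcases eq_or_lt_of_le (l2_nonneg z) with h0 | h0
    · rw [← h0]; exact l2_nonneg v
    · have h1 : l2 z ^ 2 ≤ l2 z * l2 v := by
        rw [← dotProduct_self_eq_sq, hzz, ← hzv]
        exact dotProduct_le_l2 z v
      rw [sq] at h1
      exact le_of_mul_le_mul_left h1 h0
  set Pw := B.mulVec (G⁻¹.mulVec w) with hPw
  have hwsq : w ⬝ᵥ w = Pw ⬝ᵥ z := by
    have h2 : w ⬝ᵥ w = w ⬝ᵥ (G⁻¹.mulVec (G.mulVec w)) := by
      rw [Matrix.mulVec_mulVec, Matrix.nonsing_inv_mul _ hinv, Matrix.one_mulVec]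
    rw [h2, hform w (G.mulVec w), hGw]
  have hPw2 : l2 Pw ^ 2 ≤ 2 * l2 w ^ 2 := by
    rw [← dotProduct_self_eq_sq, ← hform w w]
    calc w ⬝ᵥ (G⁻¹.mulVec w) ≤ l2 w * l2 (G⁻¹.mulVec w) := dotProduct_le_l2 _ _
      _ ≤ l2 w * (2 * l2 w) := mul_le_mul_of_nonneg_left (hgram w) (l2_nonneg w)
      _ = 2 * l2 w ^ 2 := by ring
  have hPwle : l2 Pw ≤ Real.sqrt 2 * l2 w := by
    have h := Real.sqrt_le_sqrt hPw2
    rwa [Real.sqrt_sq (l2_nonneg Pw), Real.sqrt_mul (by norm_num : (0:ℝ) ≤ 2),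
      Real.sqrt_sq (l2_nonneg w)] at h
  rcases eq_or_lt_of_le (l2_nonneg w) with h0 | h0
  · rw [← h0]; exact mul_nonneg (Real.sqrt_nonneg 2) (l2_nonneg v)
  · have h1 : l2 w ^ 2 ≤ (Real.sqrt 2 * l2 v) * l2 w := by
      rw [← dotProduct_self_eq_sq, hwsq]
      calc Pw ⬝ᵥ z ≤ l2 Pw * l2 z := dotProduct_le_l2 _ _
        _ ≤ (Real.sqrt 2 * l2 w) * l2 v :=
            mul_le_mul hPwle hzlev (l2_nonneg z) (by positivity)
        _ = (Real.sqrt 2 * l2 v) * l2 w := by ring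
    rw [sq] at h1
    exact le_of_mul_le_mul_right (by linarith [h1]) h0

lemma rsign_mul_self {x : ℝ} (h : x ≠ 0) : Real.sign x * x = |x| := by
  rcases h.lt_or_gt with h | h
  · rw [Real.sign_of_neg h, abs_of_neg h]; ring
  · rw [Real.sign_of_pos h, abs_of_pos h]; ring

lemma abs_sign_le (x : ℝ) : |Real.sign x| ≤ 1 := by
  rcases lt_trichotomy x 0 with h | h | h
  · rw [Real.sign_of_neg h]; norm_num
  · rw [h, Real.sign_zero]; norm_num
  · rw [Real.sign_of_pos h]; norm_num

lemma colSub_transpose_dvec {n m : ℕ} (A : Matrix (Fin n) (Fin m) ℝ) (I : Finset (Fin m))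
    (x0 : Fin m → ℝ) (hinv : IsUnit (gram A I).det) :
    (colSub A I)ᵀ.mulVec (dvec A I x0) = signI x0 I := by
  rw [dvec]
  have h1 : (colSub A I)ᵀ.mulVec ((colSub A I).mulVec ((gram A I)⁻¹.mulVec (signI x0 I)))
      = (gram A I).mulVec ((gram A I)⁻¹.mulVec (signI x0 I)) := by
    rw [Matrix.mulVec_mulVec]; rfl
  rw [h1, Matrix.mulVec_mulVec, Matrix.mul_nonsing_inv _ hinv, Matrix.one_mulVec]

end Aux

/-- ℓ¹ error bound `‖x⋆ − x⁰‖₁ ≤ (ε/3)(14√(2p) + 16p)`. -/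
theorem l1_error_bound {n m p : ℕ} (A : Matrix (Fin n) (Fin m) ℝ)
    (x0 xs : Fin m → ℝ) (b y : Fin n → ℝ) (ε : ℝ)
    (I : Finset (Fin m)) (hI : ∀ i, i ∈ I ↔ x0 i ≠ 0) (hp : I.card = p)
    (hcols : ∀ j, l2 (fun i => A i j) = 1)
    (hinv : IsUnit (gram A I).det)
    (hgram : opNorm2 ((gram A I)⁻¹) ≤ 2)
    (hIC : IC A I x0 ≤ 1 / 4)
    (hy : y = A.mulVec x0 + b) (hb : l2 b ≤ ε)
    (hfeas : l2 (A.mulVec xs - y) ≤ ε)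
    (hmin : ∀ x : Fin m → ℝ, l2 (A.mulVec x - y) ≤ ε → l1 xs ≤ l1 x) :
    l1 (xs - x0) ≤ ε / 3 * (14 * Real.sqrt (2 * p) + 16 * p) := by
  have ε0 : 0 ≤ ε := (l2_nonneg b).trans hb
  have hgram' : ∀ x, l2 ((gram A I)⁻¹.mulVec x) ≤ 2 * l2 x :=
    fun x => opNorm2_bound _ hgram x
  have hICj : ∀ j ∉ I, |∑ i, A i j * dvec A I x0 i| ≤ 1 / 4 := by
    intro j hj
    have hfin : Set.Finite {y | ∃ j ∉ I, y = |∑ i, A i j * dvec A I x0 i|} := by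
      apply Set.Finite.subset (Set.finite_range fun j => |∑ i, A i j * dvec A I x0 i|)
      rintro q ⟨j, -, rfl⟩
      exact ⟨j, rfl⟩
    exact le_trans (le_csSup hfin.bddAbove ⟨j, hj, rfl⟩) hIC
  have hx0supp : ∀ i ∉ I, x0 i = 0 := by
    intro i hi
    by_contra hne
    exact hi ((hI i).mpr hne)
  set hv : Fin m → ℝ := xs - x0 with hhv
  have hvapp : ∀ i, hv i = xs i - x0 i := fun i => rfl
  have hAh : l2 (A.mulVec hv) ≤ 2 * ε := by
    have e : A.mulVec hv = (A.mulVec xs - y) + b := by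
      rw [hhv, Matrix.mulVec_sub, hy]; abel
    calc l2 (A.mulVec hv) = l2 ((A.mulVec xs - y) + b) := by rw [e]
      _ ≤ l2 (A.mulVec xs - y) + l2 b := l2_add_le _ _
      _ ≤ ε + ε := add_le_add hfeas hb
      _ = 2 * ε := by ring
  have hxs : l1 xs ≤ l1 x0 := by
    apply hmin
    rw [hy, show A.mulVec x0 - (A.mulVec x0 + b) = -b by abel, l2_neg]
    exact hb
  set Lc := ∑ i ∈ Iᶜ, |hv i| with hLcdef
  have hLc0 : 0 ≤ Lc := Finset.sum_nonneg fun _ _ => abs_nonneg _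
  -- cone constraint
  have cone : Lc ≤ -∑ i ∈ I, Real.sign (x0 i) * hv i := by
    have key : ∀ i ∈ I, |x0 i| + Real.sign (x0 i) * hv i ≤ |xs i| := by
      intro i hi
      have hne : x0 i ≠ 0 := (hI i).mp hi
      have h1 : Real.sign (x0 i) * x0 i = |x0 i| := rsign_mul_self hne
      have h2 : Real.sign (x0 i) * xs i ≤ |xs i| := by
        calc Real.sign (x0 i) * xs i ≤ |Real.sign (x0 i) * xs i| := le_abs_self _
          _ = |Real.sign (x0 i)| * |xs i| := abs_mul _ _
          _ ≤ 1 * |xs i| := mul_le_mul_of_nonneg_right (abs_sign_le _) (abs_nonneg _)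
          _ = |xs i| := one_mul _
      have h3 : Real.sign (x0 i) * hv i
          = Real.sign (x0 i) * xs i - Real.sign (x0 i) * x0 i := by
        rw [hvapp]; ring
      rw [h3, h1]; linarith
    have split_xs : l1 xs = ∑ i ∈ I, |xs i| + ∑ i ∈ Iᶜ, |xs i| :=
      (Finset.sum_add_sum_compl I _).symm
    have hxsc : ∑ i ∈ Iᶜ, |xs i| = Lc := by
      refine Finset.sum_congr rfl fun i hi => ?_
      rw [hvapp, hx0supp i (Finset.mem_compl.mp hi), sub_zero]
    have split_x0 : l1 x0 = ∑ i ∈ I, |x0 i| := by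
      rw [l1, ← Finset.sum_add_sum_compl I (fun i => |x0 i|)]
      have t : ∑ i ∈ Iᶜ, |x0 i| = 0 := Finset.sum_eq_zero fun i hi => by
        rw [hx0supp i (Finset.mem_compl.mp hi), abs_zero]
      rw [t, add_zero]
    have big : ∑ i ∈ I, (|x0 i| + Real.sign (x0 i) * hv i) + Lc ≤ l1 x0 := by
      calc ∑ i ∈ I, (|x0 i| + Real.sign (x0 i) * hv i) + Lc
          ≤ ∑ i ∈ I, |xs i| + ∑ i ∈ Iᶜ, |xs i| := by
            rw [hxsc]; exact add_le_add_left (Finset.sum_le_sum key) Lc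
        _ = l1 xs := split_xs.symm
        _ ≤ l1 x0 := hxs
    rw [Finset.sum_add_distrib, split_x0] at big
    linarith
  -- certificate
  have hdualI : ∀ j ∈ I, (∑ i, A i j * dvec A I x0 i) = Real.sign (x0 j) := by
    intro j hj
    have h := congrFun (colSub_transpose_dvec A I x0 hinv) ⟨j, hj⟩
    simpa [Matrix.mulVec, dotProduct, Matrix.transpose_apply, colSub, signI] using h
  have hsplit : dvec A I x0 ⬝ᵥ A.mulVec hv
      = ∑ j ∈ I, Real.sign (x0 j) * hv j
        + ∑ j ∈ Iᶜ, (∑ i, A i j * dvec A I x0 i) * hv j := by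
    have e1 : dvec A I x0 ⬝ᵥ A.mulVec hv = (Aᵀ.mulVec (dvec A I x0)) ⬝ᵥ hv := by
      rw [Matrix.dotProduct_mulVec, ← Matrix.mulVec_transpose]
    have e2 : (Aᵀ.mulVec (dvec A I x0)) ⬝ᵥ hv
        = ∑ j, (∑ i, A i j * dvec A I x0 i) * hv j := by
      simp [Matrix.mulVec, dotProduct, Matrix.transpose_apply]
    rw [e1, e2, ← Finset.sum_add_sum_compl I]
    congr 1
    exact Finset.sum_congr rfl fun j hj => by rw [hdualI j hj]
  -- ‖d‖ ≤ √(2p)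
  have hd2 : l2 (dvec A I x0) ≤ Real.sqrt (2 * p) := by
    have hs2 : l2 (signI x0 I) ^ 2 ≤ p := by
      rw [sq_l2]
      calc ∑ j : {j // j ∈ I}, signI x0 I j ^ 2 ≤ ∑ _j : {j // j ∈ I}, (1:ℝ) := by
            refine Finset.sum_le_sum fun j _ => ?_
            rw [← sq_abs]
            exact pow_le_one₀ (abs_nonneg _) (abs_sign_le _)
        _ = (Fintype.card {j // j ∈ I} : ℝ) := by simp
        _ = p := by rw [Fintype.card_coe, hp]
    have hdd : dvec A I x0 ⬝ᵥ dvec A I x0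
        = ((gram A I)⁻¹.mulVec (signI x0 I)) ⬝ᵥ signI x0 I := by
      nth_rewrite 1 [dvec]
      rw [adjoint_dot, colSub_transpose_dvec A I x0 hinv]
    have hdle : l2 (dvec A I x0) ^ 2 ≤ 2 * p := by
      rw [← dotProduct_self_eq_sq, hdd]
      calc ((gram A I)⁻¹.mulVec (signI x0 I)) ⬝ᵥ signI x0 I
          ≤ l2 ((gram A I)⁻¹.mulVec (signI x0 I)) * l2 (signI x0 I) := dotProduct_le_l2 _ _
        _ ≤ (2 * l2 (signI x0 I)) * l2 (signI x0 I) :=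
            mul_le_mul_of_nonneg_right (hgram' _) (l2_nonneg _)
        _ = 2 * l2 (signI x0 I) ^ 2 := by ring
        _ ≤ 2 * p := by linarith [hs2]
    have h := Real.sqrt_le_sqrt hdle
    rwa [Real.sqrt_sq (l2_nonneg _)] at h
  -- bound on Lc
  have hLc : Lc ≤ 8 / 3 * (ε * Real.sqrt (2 * p)) := by
    have h2 : -(dvec A I x0 ⬝ᵥ A.mulVec hv) ≤ Real.sqrt (2 * p) * (2 * ε) := by
      calc -(dvec A I x0 ⬝ᵥ A.mulVec hv) = (-(dvec A I x0)) ⬝ᵥ A.mulVec hv := by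
            rw [neg_dotProduct]
        _ ≤ l2 (-(dvec A I x0)) * l2 (A.mulVec hv) := dotProduct_le_l2 _ _
        _ = l2 (dvec A I x0) * l2 (A.mulVec hv) := by rw [l2_neg]
        _ ≤ Real.sqrt (2 * p) * (2 * ε) :=
            mul_le_mul hd2 hAh (l2_nonneg _) (Real.sqrt_nonneg _)
    have h4 : ∑ j ∈ Iᶜ, (∑ i, A i j * dvec A I x0 i) * hv j ≤ 1 / 4 * Lc := by
      rw [hLcdef, Finset.mul_sum]
      refine Finset.sum_le_sum fun j hj => ?_
      calc (∑ i, A i j * dvec A I x0 i) * hv j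
          ≤ |(∑ i, A i j * dvec A I x0 i) * hv j| := le_abs_self _
        _ = |∑ i, A i j * dvec A I x0 i| * |hv j| := abs_mul _ _
        _ ≤ 1 / 4 * |hv j| :=
            mul_le_mul_of_nonneg_right (hICj j (Finset.mem_compl.mp hj)) (abs_nonneg _)
    have h1 : -(∑ j ∈ I, Real.sign (x0 j) * hv j)
        ≤ Real.sqrt (2 * p) * (2 * ε) + 1 / 4 * Lc := by
      have e : -(∑ j ∈ I, Real.sign (x0 j) * hv j)
          = -(dvec A I x0 ⬝ᵥ A.mulVec hv)
            + ∑ j ∈ Iᶜ, (∑ i, A i j * dvec A I x0 i) * hv j := by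
        rw [hsplit]; ring
      rw [e]
      exact add_le_add h2 h4
    have := cone.trans h1
    linarith
  -- decomposition
  set g : Fin m → ℝ := fun i => if i ∈ I then 0 else hv i with hgdef
  have hdecomp : A.mulVec hv = (colSub A I).mulVec (fun j => hv j) + A.mulVec g := by
    funext i
    simp only [Matrix.mulVec, dotProduct, Pi.add_apply, colSub]
    rw [Finset.sum_coe_sort I (fun j => A i j * hv j)]
    have hg : ∑ j, A i j * g j = ∑ j ∈ Iᶜ, A i j * hv j := by
      rw [← Finset.sum_add_sum_compl I (fun j => A i j * g j)]
      have t1 : ∑ j ∈ I, A i j * g j = 0 :=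
        Finset.sum_eq_zero fun j hj => by simp [hgdef, hj]
      have t2 : ∑ j ∈ Iᶜ, A i j * g j = ∑ j ∈ Iᶜ, A i j * hv j :=
        Finset.sum_congr rfl fun j hj => by simp [hgdef, Finset.mem_compl.mp hj]
      rw [t1, t2, zero_add]
    rw [hg, Finset.sum_add_sum_compl]
  have hIdent : (fun j : {j // j ∈ I} => hv j)
      = (gram A I)⁻¹.mulVec ((colSub A I)ᵀ.mulVec (A.mulVec hv))
        - (gram A I)⁻¹.mulVec ((colSub A I)ᵀ.mulVec (A.mulVec g)) := by
    have e1 : (colSub A I)ᵀ.mulVec (A.mulVec hv)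
        = (gram A I).mulVec (fun j => hv j) + (colSub A I)ᵀ.mulVec (A.mulVec g) := by
      rw [hdecomp, Matrix.mulVec_add]
      congr 1
      rw [Matrix.mulVec_mulVec]; rfl
    have e2 : (gram A I)⁻¹.mulVec ((gram A I).mulVec (fun j : {j // j ∈ I} => hv j))
        = fun j : {j // j ∈ I} => hv j := by
      rw [Matrix.mulVec_mulVec, Matrix.nonsing_inv_mul _ hinv, Matrix.one_mulVec]
    rw [e1, Matrix.mulVec_add, e2]
    abel
  have hu_le : l2 (A.mulVec g) ≤ Lc := by
    have e : A.mulVec g = ∑ j : Fin m, g j • (fun i => A i j) := by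
      funext i
      simp [Matrix.mulVec, dotProduct, Finset.sum_apply, mul_comm]
    calc l2 (A.mulVec g) = l2 (∑ j : Fin m, g j • (fun i => A i j)) := by rw [e]
      _ ≤ ∑ j : Fin m, l2 (g j • (fun i => A i j)) := l2_sum_le _ _
      _ = ∑ j : Fin m, |g j| := by
          refine Finset.sum_congr rfl fun j _ => ?_
          rw [l2_smul, hcols j, mul_one]
      _ = Lc := by
          rw [hLcdef, ← Finset.sum_add_sum_compl I (fun j => |g j|)]
          have t1 : ∑ j ∈ I, |g j| = 0 :=
            Finset.sum_eq_zero fun j hj => by simp [hgdef, hj]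
          have t2 : ∑ j ∈ Iᶜ, |g j| = ∑ j ∈ Iᶜ, |hv j| :=
            Finset.sum_congr rfl fun j hj => by simp [hgdef, Finset.mem_compl.mp hj]
          rw [t1, t2, zero_add]
  have hvI_le : l2 (fun j : {j // j ∈ I} => hv j)
      ≤ Real.sqrt 2 * (2 * ε) + Real.sqrt 2 * Lc := by
    rw [hIdent]
    refine (l2_sub_le _ _).trans (add_le_add ?_ ?_)
    · exact (proj_bound A I hinv hgram' _).trans
        (mul_le_mul_of_nonneg_left hAh (Real.sqrt_nonneg 2))
    · exact (proj_bound A I hinv hgram' _).trans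
        (mul_le_mul_of_nonneg_left hu_le (Real.sqrt_nonneg 2))
  have hl1I : ∑ i ∈ I, |hv i| ≤ Real.sqrt p * l2 (fun j : {j // j ∈ I} => hv j) := by
    have h := l1_le_sqrt_card_l2 (fun j : {j // j ∈ I} => hv j)
    rw [l1] at h
    rw [← Finset.sum_coe_sort I (fun i => |hv i|)]
    calc ∑ j : {j // j ∈ I}, |hv ↑j|
        ≤ Real.sqrt (Fintype.card {j // j ∈ I}) * l2 (fun j : {j // j ∈ I} => hv j) := h
      _ = Real.sqrt p * l2 (fun j : {j // j ∈ I} => hv j) := by rw [Fintype.card_coe, hp]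
  have split : l1 hv = ∑ i ∈ I, |hv i| + Lc := by
    rw [hLcdef, l1, ← Finset.sum_add_sum_compl I (fun i => |hv i|)]
  have hps : Real.sqrt p * Real.sqrt 2 = Real.sqrt (2 * p) := by
    rw [mul_comm, ← Real.sqrt_mul (by norm_num : (0:ℝ) ≤ 2)]
  have hsq : Real.sqrt (2 * (p:ℝ)) ^ 2 = 2 * p := Real.sq_sqrt (by positivity)
  have hS0 : 0 ≤ Real.sqrt (2 * (p:ℝ)) := Real.sqrt_nonneg _
  have hSLc : Real.sqrt (2 * (p:ℝ)) * Lc ≤ 16 / 3 * (ε * p) := by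
    calc Real.sqrt (2 * (p:ℝ)) * Lc
        ≤ Real.sqrt (2 * (p:ℝ)) * (8 / 3 * (ε * Real.sqrt (2 * p))) :=
          mul_le_mul_of_nonneg_left hLc hS0
      _ = 8 / 3 * ε * Real.sqrt (2 * (p:ℝ)) ^ 2 := by ring
      _ = 8 / 3 * ε * (2 * p) := by rw [hsq]
      _ = 16 / 3 * (ε * p) := by ring
  calc l1 hv = ∑ i ∈ I, |hv i| + Lc := split
    _ ≤ Real.sqrt p * l2 (fun j : {j // j ∈ I} => hv j) + Lc := add_le_add_left hl1I Lc
    _ ≤ Real.sqrt p * (Real.sqrt 2 * (2 * ε) + Real.sqrt 2 * Lc) + Lc :=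
        add_le_add_left (mul_le_mul_of_nonneg_left hvI_le (Real.sqrt_nonneg _)) Lc
    _ = Real.sqrt (2 * p) * (2 * ε) + Real.sqrt (2 * p) * Lc + Lc := by
        rw [show Real.sqrt (p:ℝ) * (Real.sqrt 2 * (2 * ε) + Real.sqrt 2 * Lc)
          = (Real.sqrt (p:ℝ) * Real.sqrt 2) * (2 * ε)
            + (Real.sqrt (p:ℝ) * Real.sqrt 2) * Lc from by ring, hps]
    _ ≤ Real.sqrt (2 * p) * (2 * ε) + 16 / 3 * (ε * p) + Lc := by linarith [hSLc]
    _ ≤ Real.sqrt (2 * p) * (2 * ε) + 16 / 3 * (ε * p) + 8 / 3 * (ε * Real.sqrt (2 * p)) := by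
        linarith [hLc]
    _ = ε / 3 * (14 * Real.sqrt (2 * p) + 16 * p) := by ring
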